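/- Every butterfly is strongly perfect. -/

import Mathlib

open SimpleGraph

section Defs

variable {V : Type*}

/-- A stable (independent) set of a graph. -/
def IsStable (G : SimpleGraph V) (S : Set V) : Prop :=
  ∀ ⦃u v : V⦄, u ∈ S → v ∈ S → ¬ G.Adj u v

/-- `C` is a maximal clique of the induced subgraph `G[W]`. -/
def IsMaxCliqueOn (G : SimpleGraph V) (W C : Set V) : Prop :=
  C ⊆ W ∧ G.IsClique C ∧ ∀ D : Set V, D ⊆ W → G.IsClique D → C ⊆ D → D = C

/-- `C` is a maximal clique of `G`. -/
def IsMaxClique (G : SimpleGraph V) (C : Set V) : Prop :=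
  G.IsClique C ∧ ∀ D : Set V, G.IsClique D → C ⊆ D → D = C

/-- `S` is a strong stable set of the induced subgraph `G[W]`. -/
def StrongStableOn (G : SimpleGraph V) (W S : Set V) : Prop :=
  S ⊆ W ∧ IsStable G S ∧ ∀ C : Set V, IsMaxCliqueOn G W C → C.Nonempty → (S ∩ C).Nonempty

/-- `S` is a strong stable set of `G`. -/
def StrongStable (G : SimpleGraph V) (S : Set V) : Prop :=
  IsStable G S ∧ ∀ C : Set V, IsMaxClique G C → C.Nonempty → (S ∩ C).Nonempty

/-- The induced subgraph `G[W]` is strongly perfect. -/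
def StronglyPerfectOn (G : SimpleGraph V) (W : Set V) : Prop :=
  ∀ U : Set V, U ⊆ W → ∃ S : Set V, StrongStableOn G U S

/-- `G` is strongly perfect: every induced subgraph has a strong stable set. -/
def StronglyPerfect (G : SimpleGraph V) : Prop :=
  ∀ U : Set V, ∃ S : Set V, StrongStableOn G U S

/-- `G` is minimal non-strongly-perfect. -/
def MinimalNSP (G : SimpleGraph V) : Prop :=
  ¬ StronglyPerfect G ∧ ∀ W : Set V, W ≠ Set.univ → StronglyPerfectOn G W

end Defs

/-- Vertices of a butterfly with path-lengths `α = |P₁|`, `β = |P₂|`, `γ = |P₃|`: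
`none` is the head `v`, and `some i` is the `i`-th vertex of the induced path
`a_1-…-a_k(=b_1)-…-b_ℓ(=c_1)-…-c_m` of total length `α+β+γ`. -/
abbrev ButterflyV (a b c : ℕ) := Option (Fin (a + b + c + 1))

/-- The butterfly: the head `v` is complete to `P₂ ∪ {a_1, c_m}`, i.e. to the path
vertices with index `0`, `α+β+γ`, or in `[α, α+β]`, and no other edges. -/
def butterflyRel (a b c : ℕ) : ButterflyV a b c → ButterflyV a b c → Prop
  | some i, some j => (j : ℕ) = (i : ℕ) + 1
  | none, some i => (i : ℕ) = 0 ∨ (i : ℕ) = a + b + c ∨ (a ≤ (i : ℕ) ∧ (i : ℕ) ≤ a + b)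
  | _, _ => False

def butterfly (a b c : ℕ) : SimpleGraph (ButterflyV a b c) :=
  SimpleGraph.fromRel (butterflyRel a b c)

namespace ButterflyAux

/-- Start of the run of `i` in `u`, clamped below by `lo`. -/
noncomputable def runstart (u : Set ℕ) (lo i : ℕ) : ℕ :=
  sInf {j | lo ≤ j ∧ ∀ k, j ≤ k → k ≤ i → k ∈ u}

/-- Right-aligned condition. -/
def RA (u : Set ℕ) (hi : ℕ) (R : Prop) (i : ℕ) : Prop :=
  R ∧ ∀ k, i ≤ k → k ≤ hi → k ∈ u

/-- The stable set on a segment. -/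
def T (u : Set ℕ) (lo hi : ℕ) (R : Prop) : Set ℕ :=
  {i | lo ≤ i ∧ i ≤ hi ∧ i ∈ u ∧
    ((RA u hi R i ∧ Even (hi - i)) ∨ (¬ RA u hi R i ∧ Even (i - runstart u lo i)))}

variable {u : Set ℕ} {lo hi i : ℕ} {R : Prop}

lemma T_mem_bounds (h : i ∈ T u lo hi R) : lo ≤ i ∧ i ≤ hi ∧ i ∈ u :=
  ⟨h.1, h.2.1, h.2.2.1⟩

lemma self_mem_runset (h1 : lo ≤ i) (h2 : i ∈ u) :
    i ∈ {j | lo ≤ j ∧ ∀ k, j ≤ k → k ≤ i → k ∈ u} :=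
  ⟨h1, fun k hk hk' => by have : k = i := le_antisymm hk' hk; exact this ▸ h2⟩

lemma runstart_spec (h1 : lo ≤ i) (h2 : i ∈ u) :
    lo ≤ runstart u lo i ∧ ∀ k, runstart u lo i ≤ k → k ≤ i → k ∈ u :=
  Nat.sInf_mem ⟨i, self_mem_runset h1 h2⟩

lemma runstart_le (h1 : lo ≤ i) (h2 : i ∈ u) : runstart u lo i ≤ i :=
  Nat.sInf_le (self_mem_runset h1 h2)

lemma runstart_succ (h1 : lo ≤ i) (h2 : i ∈ u) (h3 : i + 1 ∈ u) :
    runstart u lo (i + 1) = runstart u lo i := by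
  unfold runstart
  congr 1
  ext j
  constructor
  · rintro ⟨hj, hall⟩
    exact ⟨hj, fun k hk hk' => hall k hk (by omega)⟩
  · rintro ⟨hj, hall⟩
    refine ⟨hj, fun k hk hk' => ?_⟩
    rcases Nat.lt_or_ge k (i + 1) with h | h
    · exact hall k hk (by omega)
    · have : k = i + 1 := by omega
      exact this ▸ h3

lemma runstart_eq_self (h1 : lo ≤ i) (h2 : i ∈ u) (h3 : i = lo ∨ (i - 1) ∉ u) :
    runstart u lo i = i := by
  refine le_antisymm (runstart_le h1 h2) ?_
  by_contra hlt
  push_neg at hlt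
  obtain ⟨hge, hall⟩ := runstart_spec h1 h2
  rcases h3 with h3 | h3
  · omega
  · exact h3 (hall (i - 1) (by omega) (by omega))

lemma RA_succ_iff (hhi : i + 1 ≤ hi) (h2 : i ∈ u) :
    RA u hi R i ↔ RA u hi R (i + 1) := by
  constructor
  · rintro ⟨hR, hall⟩; exact ⟨hR, fun k hk hk' => hall k (by omega) hk'⟩
  · rintro ⟨hR, hall⟩
    refine ⟨hR, fun k hk hk' => ?_⟩
    rcases Nat.lt_or_ge k (i + 1) with h | h
    · have : k = i := by omega
      exact this ▸ h2
    · exact hall k h hk'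

lemma T_not_both (hlo : lo ≤ i) (hhi : i + 1 ≤ hi) (h2 : i ∈ u) (h3 : i + 1 ∈ u) :
    ¬ (i ∈ T u lo hi R ∧ i + 1 ∈ T u lo hi R) := by
  rintro ⟨⟨_, _, _, hT1⟩, ⟨_, _, _, hT2⟩⟩
  by_cases hra : RA u hi R i
  · have hra' : RA u hi R (i + 1) := (RA_succ_iff hhi h2).mp hra
    rcases hT1 with ⟨_, he1⟩ | ⟨hn, _⟩
    · rcases hT2 with ⟨_, he2⟩ | ⟨hn, _⟩
      · obtain ⟨x, hx⟩ := he1; obtain ⟨y, hy⟩ := he2; omega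
      · exact hn hra'
    · exact hn hra
  · have hra' : ¬ RA u hi R (i + 1) := fun h => hra ((RA_succ_iff hhi h2).mpr h)
    rcases hT1 with ⟨hn, _⟩ | ⟨_, he1⟩
    · exact hra hn
    · rcases hT2 with ⟨hn, _⟩ | ⟨_, he2⟩
      · exact hra' hn
      · rw [runstart_succ hlo h2 h3] at he2
        have hle := runstart_le hlo h2
        obtain ⟨x, hx⟩ := he1; obtain ⟨y, hy⟩ := he2; omega

lemma T_or (hlo : lo ≤ i) (hhi : i + 1 ≤ hi) (h2 : i ∈ u) (h3 : i + 1 ∈ u) :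
    i ∈ T u lo hi R ∨ i + 1 ∈ T u lo hi R := by
  by_cases hra : RA u hi R i
  · have hra' : RA u hi R (i + 1) := (RA_succ_iff hhi h2).mp hra
    rcases Nat.even_or_odd (hi - i) with he | ho
    · exact Or.inl ⟨hlo, by omega, h2, Or.inl ⟨hra, he⟩⟩
    · refine Or.inr ⟨by omega, hhi, h3, Or.inl ⟨hra', ?_⟩⟩
      obtain ⟨x, hx⟩ := ho
      exact ⟨x, by omega⟩
  · have hra' : ¬ RA u hi R (i + 1) := fun h => hra ((RA_succ_iff hhi h2).mpr h)
    have hle := runstart_le hlo h2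
    rcases Nat.even_or_odd (i - runstart u lo i) with he | ho
    · exact Or.inl ⟨hlo, by omega, h2, Or.inr ⟨hra, he⟩⟩
    · refine Or.inr ⟨by omega, hhi, h3, Or.inr ⟨hra', ?_⟩⟩
      rw [runstart_succ hlo h2 h3]
      obtain ⟨x, hx⟩ := ho
      exact ⟨x + 1, by omega⟩

lemma T_lo_mem (h2 : lo ∈ u) (hlohi : lo ≤ hi)
    (hpar : RA u hi R lo → Even (hi - lo)) : lo ∈ T u lo hi R := by
  by_cases hra : RA u hi R lo
  · exact ⟨le_refl lo, hlohi, h2, Or.inl ⟨hra, hpar hra⟩⟩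
  · refine ⟨le_refl lo, hlohi, h2, Or.inr ⟨hra, ?_⟩⟩
    rw [runstart_eq_self (le_refl lo) h2 (Or.inl rfl)]
    simp

lemma T_hi_mem (h2 : hi ∈ u) (hR : R) (hlohi : lo ≤ hi) : hi ∈ T u lo hi R := by
  refine ⟨hlohi, le_refl hi, h2, Or.inl ⟨⟨hR, fun k hk hk' => ?_⟩, by simp⟩⟩
  have : k = hi := le_antisymm hk' hk
  exact this ▸ h2

lemma T_isolated (hlo : lo ≤ i) (hhi : i ≤ hi) (h2 : i ∈ u)
    (hl : i = lo ∨ (i - 1) ∉ u) (hr : i = hi ∨ (i + 1) ∉ u) : i ∈ T u lo hi R := by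
  by_cases hra : RA u hi R i
  · have : i = hi := by
      rcases hr with h | h
      · exact h
      · by_contra hne
        exact h (hra.2 (i + 1) (by omega) (by omega))
    exact ⟨hlo, hhi, h2, Or.inl ⟨hra, by simp [this]⟩⟩
  · refine ⟨hlo, hhi, h2, Or.inr ⟨hra, ?_⟩⟩
    rw [runstart_eq_self hlo h2 hl]
    simp

lemma adj_some_some {a b c : ℕ} (i j : Fin (a + b + c + 1)) :
    (butterfly a b c).Adj (some i) (some j) ↔
      ((j : ℕ) = (i : ℕ) + 1 ∨ (i : ℕ) = (j : ℕ) + 1) := by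
  rw [butterfly, SimpleGraph.fromRel_adj]
  simp only [butterflyRel]
  constructor
  · rintro ⟨-, h⟩; exact h
  · intro h
    refine ⟨fun he => ?_, h⟩
    rw [Option.some.injEq] at he
    have : (i : ℕ) = (j : ℕ) := by rw [he]
    omega

lemma adj_none_some {a b c : ℕ} (i : Fin (a + b + c + 1)) :
    (butterfly a b c).Adj none (some i) ↔
      ((i : ℕ) = 0 ∨ (i : ℕ) = a + b + c ∨ (a ≤ (i : ℕ) ∧ (i : ℕ) ≤ a + b)) := by
  rw [butterfly, SimpleGraph.fromRel_adj]
  simp only [butterflyRel]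
  constructor
  · rintro ⟨-, h | h⟩
    · exact h
    · exact h.elim
  · intro h
    exact ⟨by simp, Or.inl h⟩

end ButterflyAux

open ButterflyAux in
theorem butterfly_stronglyPerfect (a b c : ℕ) (ha2 : 2 ≤ a) (hae : Even a)
    (hbo : Odd b) (hc2 : 2 ≤ c) (hce : Even c) :
    StronglyPerfect (butterfly a b c) := by
  classical
  obtain ⟨bk, hbk⟩ := hbo
  obtain ⟨ak, hak⟩ := hae
  obtain ⟨ck, hck⟩ := hce
  intro U
  set u : Set ℕ := {m | ∃ j : Fin (a+b+c+1), (j:ℕ) = m ∧ some j ∈ U} with hu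
  have hu_mem : ∀ j : Fin (a+b+c+1), (j:ℕ) ∈ u ↔ some j ∈ U := by
    intro j
    constructor
    · rintro ⟨j', h1, h2⟩
      rwa [Fin.val_injective h1] at h2
    · intro h; exact ⟨j, rfl, h⟩
  by_cases hv : (none : ButterflyV a b c) ∈ U
  · -- the head belongs to U
    refine ⟨{x | x = none ∨ ∃ j : Fin (a+b+c+1), x = some j ∧
        ((j:ℕ) ∈ T u 1 (a-1) (a ∈ u) ∨
         (j:ℕ) ∈ T u (a+b+1) (a+b+c-1) ((a+b+c) ∈ u))}, ?_, ?_, ?_⟩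
    · rintro x (rfl | ⟨j, rfl, hj | hj⟩)
      · exact hv
      · exact (hu_mem j).mp hj.2.2.1
      · exact (hu_mem j).mp hj.2.2.1
    · rintro x y hx hy hadj
      have stab : ∀ (lo hi : ℕ) (R : Prop) (p q : Fin (a+b+c+1)), (q:ℕ) = (p:ℕ) + 1 →
          (p:ℕ) ∈ T u lo hi R → (q:ℕ) ∈ T u lo hi R → False := by
        intro lo hi R p q hpq hp hq
        rw [hpq] at hq
        exact T_not_both hp.1 hq.2.1 hp.2.2.1 hq.2.2.1 ⟨hp, hq⟩
      rcases hx with rfl | ⟨j, rfl, hj⟩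
      · rcases hy with rfl | ⟨k, rfl, hk⟩
        · exact (butterfly a b c).loopless.irrefl _ hadj
        · rw [adj_none_some] at hadj
          have hb := k.isLt
          rcases hk with hk | hk
          · obtain ⟨h1, h2, -⟩ := T_mem_bounds hk; omega
          · obtain ⟨h1, h2, -⟩ := T_mem_bounds hk; omega
      · rcases hy with rfl | ⟨k, rfl, hk⟩
        · rw [(butterfly a b c).adj_comm, adj_none_some] at hadj
          have hb := j.isLt
          rcases hj with hj | hj
          · obtain ⟨h1, h2, -⟩ := T_mem_bounds hj; omega
          · obtain ⟨h1, h2, -⟩ := T_mem_bounds hj; omega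
        · rw [adj_some_some] at hadj
          rcases hj with hj | hj <;> rcases hk with hk | hk
          · rcases hadj with h | h
            · exact stab _ _ _ j k h hj hk
            · exact stab _ _ _ k j h hk hj
          · obtain ⟨h1, h2, -⟩ := T_mem_bounds hj
            obtain ⟨h3, h4, -⟩ := T_mem_bounds hk
            omega
          · obtain ⟨h1, h2, -⟩ := T_mem_bounds hj
            obtain ⟨h3, h4, -⟩ := T_mem_bounds hk
            omega
          · rcases hadj with h | h
            · exact stab _ _ _ j k h hj hk
            · exact stab _ _ _ k j h hk hj
    · rintro C ⟨hCU, hCcl, hCmax⟩ hCne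
      by_cases hnC : (none : ButterflyV a b c) ∈ C
      · exact ⟨none, Or.inl rfl, hnC⟩
      obtain ⟨x, hxC⟩ := hCne
      have hext : ∀ z : ButterflyV a b c, z ∈ U →
          (∀ y ∈ C, z ≠ y → (butterfly a b c).Adj z y) → z ∈ C := by
        intro z hzU hzadj
        have hmax := hCmax (insert z C) (Set.insert_subset hzU hCU)
          (hCcl.insert fun y hy hne => hzadj y hy hne)
          (Set.subset_insert _ _)
        rw [← hmax]; exact Set.mem_insert _ _
      cases x with
      | none => exact absurd hxC hnC
      | some i =>
        by_cases h2 : ∃ j : Fin (a+b+c+1), some j ∈ C ∧ j ≠ i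
        · -- C contains an edge of the path
          obtain ⟨j, hjC, hji⟩ := h2
          have hadj := hCcl hxC hjC (fun h => hji (Option.some_injective _ h).symm)
          rw [adj_some_some] at hadj
          obtain ⟨p, q, hpC, hqC, hpq⟩ :
              ∃ p q : Fin (a+b+c+1), some p ∈ C ∧ some q ∈ C ∧ (q:ℕ) = (p:ℕ)+1 := by
            rcases hadj with h | h
            · exact ⟨i, j, hxC, hjC, h⟩
            · exact ⟨j, i, hjC, hxC, h⟩
          have hpU : (p:ℕ) ∈ u := (hu_mem p).mpr (hCU hpC)
          have hqU : (q:ℕ) ∈ u := (hu_mem q).mpr (hCU hqC)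
          have hqlt := q.isLt
          have hplt := p.isLt
          have hCsub : ∀ y ∈ C, y = some p ∨ y = some q := by
            intro y hy
            cases y with
            | none => exact absurd hy hnC
            | some k =>
              by_contra hcon
              push_neg at hcon
              obtain ⟨h1, h2⟩ := hcon
              have ha1 := hCcl hy hpC h1
              have ha2 := hCcl hy hqC h2
              rw [adj_some_some] at ha1 ha2
              have hk1 : (k:ℕ) ≠ (p:ℕ) := fun h => h1 (congrArg some (Fin.val_injective h))
              have hk2 : (k:ℕ) ≠ (q:ℕ) := fun h => h2 (congrArg some (Fin.val_injective h))
              omega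
          have hnP : ¬ (((p:ℕ) = 0 ∨ (p:ℕ) = a+b+c ∨ (a ≤ (p:ℕ) ∧ (p:ℕ) ≤ a + b)) ∧
              ((q:ℕ) = 0 ∨ (q:ℕ) = a+b+c ∨ (a ≤ (q:ℕ) ∧ (q:ℕ) ≤ a + b))) := by
            rintro ⟨hP1, hP2⟩
            refine hnC (hext none hv ?_)
            intro y hy hne
            rcases hCsub y hy with rfl | rfl
            · exact (adj_none_some p).mpr hP1
            · exact (adj_none_some q).mpr hP2
          have hcases : (p:ℕ) = 0 ∨ (1 ≤ (p:ℕ) ∧ (p:ℕ)+1 ≤ a-1) ∨ (p:ℕ) = a-1 ∨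
              (a ≤ (p:ℕ) ∧ (p:ℕ)+1 ≤ a+b) ∨ (p:ℕ) = a+b ∨
              (a+b+1 ≤ (p:ℕ) ∧ (p:ℕ)+1 ≤ a+b+c-1) ∨ (p:ℕ)+1 = a+b+c := by omega
          rcases hcases with h | ⟨h, h'⟩ | h | ⟨h, h'⟩ | h | ⟨h, h'⟩ | h
          · -- p = 0, pick q = 1
            have hmem : (q:ℕ) ∈ T u 1 (a-1) (a ∈ u) := by
              rw [show (q:ℕ) = 1 by omega]
              refine T_lo_mem (by rwa [show (1:ℕ) = (q:ℕ) by omega]) (by omega) ?_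
              intro _
              exact ⟨ak - 1, by omega⟩
            exact ⟨some q, Or.inr ⟨q, rfl, Or.inl hmem⟩, hqC⟩
          · -- interior left edge
            rcases T_or (R := a ∈ u) h h' hpU (by rwa [← hpq]) with hmem | hmem
            · exact ⟨some p, Or.inr ⟨p, rfl, Or.inl hmem⟩, hpC⟩
            · exact ⟨some q, Or.inr ⟨q, rfl, Or.inl (by rwa [hpq])⟩, hqC⟩
          · -- p = a-1, pick p
            have hmem : (p:ℕ) ∈ T u 1 (a-1) (a ∈ u) := by
              rw [h]
              exact T_hi_mem (by rwa [← h]) (by rwa [show a = (q:ℕ) by omega]) (by omega)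
            exact ⟨some p, Or.inr ⟨p, rfl, Or.inl hmem⟩, hpC⟩
          · -- both in the middle: contradiction
            exact absurd ⟨Or.inr (Or.inr ⟨by omega, by omega⟩),
              Or.inr (Or.inr ⟨by omega, by omega⟩)⟩ hnP
          · -- p = a+b, pick q = a+b+1
            have hmem : (q:ℕ) ∈ T u (a+b+1) (a+b+c-1) ((a+b+c) ∈ u) := by
              rw [show (q:ℕ) = a+b+1 by omega]
              refine T_lo_mem (by rwa [show a+b+1 = (q:ℕ) by omega]) (by omega) ?_
              intro _
              exact ⟨ck - 1, by omega⟩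
            exact ⟨some q, Or.inr ⟨q, rfl, Or.inr hmem⟩, hqC⟩
          · -- interior right edge
            rcases T_or (R := (a+b+c) ∈ u) h h' hpU (by rwa [← hpq]) with hmem | hmem
            · exact ⟨some p, Or.inr ⟨p, rfl, Or.inr hmem⟩, hpC⟩
            · exact ⟨some q, Or.inr ⟨q, rfl, Or.inr (by rwa [hpq])⟩, hqC⟩
          · -- p = n-1, pick p
            have hmem : (p:ℕ) ∈ T u (a+b+1) (a+b+c-1) ((a+b+c) ∈ u) := by
              rw [show (p:ℕ) = a+b+c-1 by omega]
              exact T_hi_mem (by rwa [show a+b+c-1 = (p:ℕ) by omega])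
                (by rwa [show a+b+c = (q:ℕ) by omega]) (by omega)
            exact ⟨some p, Or.inr ⟨p, rfl, Or.inr hmem⟩, hpC⟩
        · -- C is a single path vertex
          push_neg at h2
          have hiU : (i:ℕ) ∈ u := (hu_mem i).mpr (hCU hxC)
          have hilt := i.isLt
          have hone : ∀ y ∈ C, y = some i := by
            intro y hy
            cases y with
            | none => exact absurd hy hnC
            | some k => exact congrArg some (h2 k hy)
          have hnP : ¬ ((i:ℕ) = 0 ∨ (i:ℕ) = a+b+c ∨ (a ≤ (i:ℕ) ∧ (i:ℕ) ≤ a+b)) := by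
            intro hP
            refine hnC (hext none hv ?_)
            intro y hy hne
            rw [hone y hy]
            exact (adj_none_some i).mpr hP
          have hup : (i:ℕ) = a+b+c ∨ ((i:ℕ)+1) ∉ u := by
            rcases Nat.eq_or_lt_of_le (Nat.le_of_lt_succ hilt) with he | hlt
            · exact Or.inl he
            · refine Or.inr fun hmem => ?_
              obtain ⟨j', hj'1, hj'2⟩ := hmem
              have hin := hext (some j') hj'2 (fun y hy _ => by
                rw [hone y hy]
                exact (adj_some_some j' i).mpr (Or.inr (by omega)))
              have h' := hone _ hin
              rw [Option.some.injEq] at h'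
              have : (j':ℕ) = (i:ℕ) := by rw [h']
              omega
          have hdown : (i:ℕ) = 0 ∨ ((i:ℕ)-1) ∉ u := by
            rcases Nat.eq_zero_or_pos (i:ℕ) with he | hpos
            · exact Or.inl he
            · refine Or.inr fun hmem => ?_
              obtain ⟨j', hj'1, hj'2⟩ := hmem
              have hin := hext (some j') hj'2 (fun y hy _ => by
                rw [hone y hy]
                exact (adj_some_some j' i).mpr (Or.inl (by omega)))
              have h' := hone _ hin
              rw [Option.some.injEq] at h'
              have : (j':ℕ) = (i:ℕ) := by rw [h']
              omega
          push_neg at hnP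
          obtain ⟨h0, hn', hab⟩ := hnP
          have hseg : (1 ≤ (i:ℕ) ∧ (i:ℕ) ≤ a-1) ∨ (a+b+1 ≤ (i:ℕ) ∧ (i:ℕ) ≤ a+b+c-1) := by
            omega
          rcases hseg with ⟨hs1, hs2⟩ | ⟨hs1, hs2⟩
          · have hmem : (i:ℕ) ∈ T u 1 (a-1) (a ∈ u) :=
              T_isolated hs1 hs2 hiU (Or.inr (hdown.resolve_left (by omega)))
                (Or.inr (hup.resolve_left (by omega)))
            exact ⟨some i, Or.inr ⟨i, rfl, Or.inl hmem⟩, hxC⟩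
          · have hmem : (i:ℕ) ∈ T u (a+b+1) (a+b+c-1) ((a+b+c) ∈ u) :=
              T_isolated hs1 hs2 hiU (Or.inr (hdown.resolve_left (by omega)))
                (Or.inr (hup.resolve_left (by omega)))
            exact ⟨some i, Or.inr ⟨i, rfl, Or.inr hmem⟩, hxC⟩
  · -- the head is not in U
    refine ⟨{x | ∃ j : Fin (a+b+c+1), x = some j ∧ (j:ℕ) ∈ T u 0 (a+b+c) False}, ?_, ?_, ?_⟩
    · rintro x ⟨j, rfl, hj⟩
      exact (hu_mem j).mp hj.2.2.1
    · rintro x y ⟨j, rfl, hj⟩ ⟨k, rfl, hk⟩ hadj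
      rw [adj_some_some] at hadj
      have stab : ∀ (p q : Fin (a+b+c+1)), (q:ℕ) = (p:ℕ) + 1 →
          (p:ℕ) ∈ T u 0 (a+b+c) False → (q:ℕ) ∈ T u 0 (a+b+c) False → False := by
        intro p q hpq hp hq
        rw [hpq] at hq
        exact T_not_both hp.1 hq.2.1 hp.2.2.1 hq.2.2.1 ⟨hp, hq⟩
      rcases hadj with h | h
      · exact stab j k h hj hk
      · exact stab k j h hk hj
    · rintro C ⟨hCU, hCcl, hCmax⟩ hCne
      have hnC : (none : ButterflyV a b c) ∉ C := fun h => hv (hCU h)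
      obtain ⟨x, hxC⟩ := hCne
      have hext : ∀ z : ButterflyV a b c, z ∈ U →
          (∀ y ∈ C, z ≠ y → (butterfly a b c).Adj z y) → z ∈ C := by
        intro z hzU hzadj
        have hmax := hCmax (insert z C) (Set.insert_subset hzU hCU)
          (hCcl.insert fun y hy hne => hzadj y hy hne)
          (Set.subset_insert _ _)
        rw [← hmax]; exact Set.mem_insert _ _
      cases x with
      | none => exact absurd hxC hnC
      | some i =>
        by_cases h2 : ∃ j : Fin (a+b+c+1), some j ∈ C ∧ j ≠ i
        · obtain ⟨j, hjC, hji⟩ := h2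
          have hadj := hCcl hxC hjC (fun h => hji (Option.some_injective _ h).symm)
          rw [adj_some_some] at hadj
          obtain ⟨p, q, hpC, hqC, hpq⟩ :
              ∃ p q : Fin (a+b+c+1), some p ∈ C ∧ some q ∈ C ∧ (q:ℕ) = (p:ℕ)+1 := by
            rcases hadj with h | h
            · exact ⟨i, j, hxC, hjC, h⟩
            · exact ⟨j, i, hjC, hxC, h⟩
          have hpU : (p:ℕ) ∈ u := (hu_mem p).mpr (hCU hpC)
          have hqU : (q:ℕ) ∈ u := (hu_mem q).mpr (hCU hqC)
          have hqlt := q.isLt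
          rcases T_or (hi := a+b+c) (R := False) (Nat.zero_le _) (by omega) hpU (by rwa [← hpq])
            with hmem | hmem
          · exact ⟨some p, ⟨p, rfl, hmem⟩, hpC⟩
          · exact ⟨some q, ⟨q, rfl, by rwa [hpq]⟩, hqC⟩
        · push_neg at h2
          have hiU : (i:ℕ) ∈ u := (hu_mem i).mpr (hCU hxC)
          have hilt := i.isLt
          have hone : ∀ y ∈ C, y = some i := by
            intro y hy
            cases y with
            | none => exact absurd hy hnC
            | some k => exact congrArg some (h2 k hy)
          have hup : (i:ℕ) = a+b+c ∨ ((i:ℕ)+1) ∉ u := by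
            rcases Nat.eq_or_lt_of_le (Nat.le_of_lt_succ hilt) with he | hlt
            · exact Or.inl he
            · refine Or.inr fun hmem => ?_
              obtain ⟨j', hj'1, hj'2⟩ := hmem
              have hin := hext (some j') hj'2 (fun y hy _ => by
                rw [hone y hy]
                exact (adj_some_some j' i).mpr (Or.inr (by omega)))
              have h' := hone _ hin
              rw [Option.some.injEq] at h'
              have : (j':ℕ) = (i:ℕ) := by rw [h']
              omega
          have hdown : (i:ℕ) = 0 ∨ ((i:ℕ)-1) ∉ u := by
            rcases Nat.eq_zero_or_pos (i:ℕ) with he | hpos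
            · exact Or.inl he
            · refine Or.inr fun hmem => ?_
              obtain ⟨j', hj'1, hj'2⟩ := hmem
              have hin := hext (some j') hj'2 (fun y hy _ => by
                rw [hone y hy]
                exact (adj_some_some j' i).mpr (Or.inl (by omega)))
              have h' := hone _ hin
              rw [Option.some.injEq] at h'
              have : (j':ℕ) = (i:ℕ) := by rw [h']
              omega
          have hmem : (i:ℕ) ∈ T u 0 (a+b+c) False :=
            T_isolated (Nat.zero_le _) (by omega) hiU hdown hup
          exact ⟨some i, ⟨i, rfl, hmem⟩, hxC⟩
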